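/- Let K be an infinite field, Γ = {α_1, …, α_n} a finite group of field automorphisms of K, and v a positive integer. Fix (d_1, …, d_n) ∈ ℕ^n. Then the Γ-conjugate monomials M(m), as m = (m_{ij}) ranges over all matrices in ℕ^{v×n} with ∑_{i=1}^v m_{ij} = d_j for every j, are linearly independent over K in the algebra of functions K^v → K, and the K-dimension of their span equals ∏_{j=1}^n binom(d_j + v − 1, d_j). -/

import Mathlib

/-- The `Γ`-conjugate monomial `M(m) : K^v → K` associated to an exponent matrix
`m = (m_{ij})`, namely `M(m)(k_1,…,k_v) = ∏_{j=1}^n ∏_{i=1}^v α_j(k_i)^{m_{ij}}`. -/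
def conjMonomial {K : Type*} [Field K] {n v : ℕ} (α : Fin n → RingAut K)
    (m : Fin v → Fin n → ℕ) : (Fin v → K) → K :=
  fun k => ∏ j : Fin n, ∏ i : Fin v, (α j (k i)) ^ (m i j)

/-- `conjMonomial` as a monoid homomorphism from `(Fin v → K)` (with pointwise
multiplication) to `K`. -/
def conjMonomialHom {K : Type*} [Field K] {n v : ℕ} (α : Fin n → RingAut K)
    (m : Fin v → Fin n → ℕ) : (Fin v → K) →* K where
  toFun := conjMonomial α m
  map_one' := by simp [conjMonomial]
  map_mul' k k' := by
    simp [conjMonomial, mul_pow, Finset.prod_mul_distrib]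

lemma conjMonomial_update {K : Type*} [Field K] {n v : ℕ} (α : Fin n → RingAut K)
    (m : Fin v → Fin n → ℕ) (i : Fin v) (x : K) :
    conjMonomial α m (Function.update (1 : Fin v → K) i x)
      = ∏ j : Fin n, (α j x) ^ (m i j) := by
  classical
  unfold conjMonomial
  refine Finset.prod_congr rfl fun j _ => ?_
  rw [Finset.prod_eq_single i]
  · rw [Function.update_self]
  · intro i' _ hne
    rw [Function.update_of_ne hne]
    simp
  · simp

/-- The subtype of exponent matrices with prescribed column sums is equivalent to a product
of "weak composition" subtypes. -/
def expMatrixEquiv {n v : ℕ} (d : Fin n → ℕ) :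
    {m : Fin v → Fin n → ℕ // ∀ j, ∑ i : Fin v, m i j = d j}
      ≃ (∀ j : Fin n, {c : Fin v → ℕ // ∑ i : Fin v, c i = d j}) where
  toFun m j := ⟨fun i => m.1 i j, m.2 j⟩
  invFun f := ⟨fun i j => (f j).1 i, fun j => (f j).2⟩
  left_inv m := rfl
  right_inv f := rfl

noncomputable instance compFintype {v dj : ℕ} : Fintype {c : Fin v → ℕ // ∑ i : Fin v, c i = dj} :=
  Fintype.ofEquiv _ (Sym.equivNatSumOfFintype (Fin v) dj)

noncomputable instance expMatrixFintype {n v : ℕ} (d : Fin n → ℕ) :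
    Fintype {m : Fin v → Fin n → ℕ // ∀ j, ∑ i : Fin v, m i j = d j} :=
  Fintype.ofEquiv _ (expMatrixEquiv d).symm

lemma card_expMatrix {n v : ℕ} (d : Fin n → ℕ) :
    Fintype.card {m : Fin v → Fin n → ℕ // ∀ j, ∑ i : Fin v, m i j = d j}
      = ∏ j : Fin n, (d j + v - 1).choose (d j) := by
  rw [Fintype.card_congr (expMatrixEquiv d), Fintype.card_pi]
  refine Finset.prod_congr rfl fun j _ => ?_
  rw [Fintype.card_congr (Sym.equivNatSumOfFintype (Fin v) (d j)).symm,
    Sym.card_sym_eq_choose, Fintype.card_fin, add_comm]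

section aux
variable {K : Type*} [Field K] [Infinite K] {n : ℕ}
  (Γ : Subgroup (RingAut K)) [Finite Γ]

lemma fixedInfinite : Infinite (FixedPoints.subfield Γ K) := by
  by_contra h
  rw [not_infinite_iff_finite] at h
  have : Finite K := Module.finite_of_finite (FixedPoints.subfield Γ K)
  exact absurd this (by simpa using (inferInstance : Infinite K))

lemma expInj (e : Fin n ≃ Γ) (c c' : Fin n → ℕ)
    (h : ∀ x : K, ∏ j, ((e j : RingAut K) x) ^ c j = ∏ j, ((e j : RingAut K) x) ^ c' j) :
    c = c' := by
  classical
  have hinf : Infinite (FixedPoints.subfield Γ K) := fixedInfinite Γ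
  obtain ⟨b, hb⟩ := Field.exists_primitive_element (FixedPoints.subfield Γ K) K
  set β : Fin n → K := fun j => (e j : RingAut K) b with hβ
  have hβinj : Function.Injective β := by
    intro j k hjk
    have hadj : Algebra.adjoin (FixedPoints.subfield Γ K) ({b} : Set K) = ⊤ := by
      have h2 := IntermediateField.adjoin_simple_toSubalgebra_of_isAlgebraic
        (IsIntegral.of_finite (FixedPoints.subfield Γ K) b).isAlgebraic
      rw [hb] at h2
      exact h2.symm.trans (by rfl)
    have hσ : MulSemiringAction.toAlgHom (FixedPoints.subfield Γ K) K (e j)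
        = MulSemiringAction.toAlgHom (FixedPoints.subfield Γ K) K (e k) := by
      apply AlgHom.ext_of_adjoin_eq_top hadj
      intro x hx
      rcases hx with rfl
      show (e j) • x = (e k) • x
      rw [Subgroup.smul_def, Subgroup.smul_def, RingAut.smul_def, RingAut.smul_def]
      exact hjk
    have hee : e j = e k := by
      ext x
      have h3 := DFunLike.congr_fun hσ x
      have h4 : (e j) • x = (e k) • x := h3
      rw [Subgroup.smul_def, Subgroup.smul_def, RingAut.smul_def, RingAut.smul_def] at h4
      exact h4
    exact e.injective hee
  have key : ∀ (t : FixedPoints.subfield Γ K) (j : Fin n),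
      (e j : RingAut K) (b + (t : K)) = β j + (t : K) := by
    intro t j
    have ht : (e j : RingAut K) (t : K) = (t : K) := by
      have h5 : (e j) • (t : K) = (t : K) := t.2 (e j)
      rwa [Subgroup.smul_def, RingAut.smul_def] at h5
    rw [map_add, ht]
  have hpp : (∏ j, (Polynomial.X + Polynomial.C (β j)) ^ c j)
      = ∏ j, (Polynomial.X + Polynomial.C (β j)) ^ c' j := by
    apply Polynomial.eq_of_infinite_eval_eq
    apply Set.infinite_of_injective_forall_mem
      (f := fun t : FixedPoints.subfield Γ K => (t : K))
      (fun a b hab => Subtype.ext hab)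
    intro t
    show Polynomial.eval _ _ = Polynomial.eval _ _
    simp only [Polynomial.eval_prod, Polynomial.eval_pow, Polynomial.eval_add,
      Polynomial.eval_X, Polynomial.eval_C]
    calc ∏ j, ((t : K) + β j) ^ c j
        = ∏ j, ((e j : RingAut K) (b + (t : K))) ^ c j := by
          refine Finset.prod_congr rfl fun j _ => ?_
          rw [key t j, add_comm]
      _ = ∏ j, ((e j : RingAut K) (b + (t : K))) ^ c' j := h (b + (t : K))
      _ = ∏ j, ((t : K) + β j) ^ c' j := by
          refine Finset.prod_congr rfl fun j _ => ?_
          rw [key t j, add_comm]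
  funext k
  have count_eq : ∀ (cc : Fin n → ℕ),
      (∏ j, (Polynomial.X + Polynomial.C (β j)) ^ cc j).roots.count (-(β k)) = cc k := by
    intro cc
    have hne : (∏ j : Fin n, (Polynomial.X + Polynomial.C (β j)) ^ cc j) ≠ 0 :=
      Finset.prod_ne_zero_iff.2 fun j _ =>
        pow_ne_zero _ (Polynomial.monic_X_add_C (β j)).ne_zero
    rw [Polynomial.roots_prod _ _ hne, Multiset.count_bind]
    have hterm : ∀ j : Fin n,
        ((Polynomial.X + Polynomial.C (β j)) ^ cc j).roots.count (-(β k))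
          = if j = k then cc k else 0 := by
      intro j
      have hroots : ((Polynomial.X + Polynomial.C (β j)) ^ cc j).roots
          = cc j • {-(β j)} := by
        rw [Polynomial.roots_pow]
        congr 1
        have hx : Polynomial.X + Polynomial.C (β j)
            = Polynomial.X - Polynomial.C (-(β j)) := by
          rw [map_neg, sub_neg_eq_add]
        rw [hx, Polynomial.roots_X_sub_C]
      rw [hroots, Multiset.count_nsmul, Multiset.count_singleton]
      by_cases hj : j = k
      · subst hj; simp
      · have hne2 : ¬ (-(β k) = -(β j)) := fun hq => hj (hβinj (neg_injective hq).symm)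
        simp [hne2, hj]
    calc (Multiset.map (fun j => ((Polynomial.X + Polynomial.C (β j)) ^ cc j).roots.count (-(β k)))
            Finset.univ.val).sum
        = (Multiset.map (fun j => if j = k then cc k else 0) Finset.univ.val).sum := by
          rw [Multiset.map_congr rfl (fun j _ => hterm j)]
      _ = ∑ j : Fin n, if j = k then cc k else 0 := rfl
      _ = cc k := by simp
  have h1 := count_eq c
  rw [hpp, count_eq c'] at h1
  exact h1.symm
end aux


set_option maxHeartbeats 1000000

/-- Let `K` be an infinite field, `Γ = {α_1, …, α_n}` a finite group of field
automorphisms of `K`, `v` a positive integer, and `(d_1, …, d_n) ∈ ℕ^n`.  Then the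
`Γ`-conjugate monomials `M(m)`, as `m` ranges over all exponent matrices with
`∑_i m_{ij} = d_j` for every `j`, are linearly independent over `K` in the algebra
of functions `K^v → K`, and the `K`-dimension of their span equals
`∏_j binom(d_j + v − 1, d_j)`. -/
theorem conjMonomials_linearIndependent_and_finrank_span (K : Type*) [Field K] [Infinite K]
    (n v : ℕ) (hv : 0 < v) (Γ : Subgroup (RingAut K)) [Finite Γ] (e : Fin n ≃ Γ)
    (d : Fin n → ℕ) :
    LinearIndependent K
      (fun m : {m : Fin v → Fin n → ℕ // ∀ j, ∑ i : Fin v, m i j = d j} =>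
        conjMonomial (fun j => (e j : RingAut K)) m.1) ∧
    Module.finrank K
      ↥(Submodule.span K (Set.range
        (fun m : {m : Fin v → Fin n → ℕ // ∀ j, ∑ i : Fin v, m i j = d j} =>
          conjMonomial (fun j => (e j : RingAut K)) m.1)))
      = ∏ j : Fin n, (d j + v - 1).choose (d j) := by
  classical
  set α : Fin n → RingAut K := fun j => (e j : RingAut K) with hα
  have hinj : Function.Injective
      (fun m : {m : Fin v → Fin n → ℕ // ∀ j, ∑ i : Fin v, m i j = d j} =>
        conjMonomialHom α m.1) := by
    intro m m' hmm
    have hfun : conjMonomial α m.1 = conjMonomial α m'.1 :=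
      congrArg DFunLike.coe hmm
    apply Subtype.ext
    funext i
    have hrow : (fun j => m.1 i j) = fun j => m'.1 i j := by
      apply expInj Γ e
      intro x
      have hx := congrFun hfun (Function.update (1 : Fin v → K) i x)
      rwa [conjMonomial_update, conjMonomial_update] at hx
    exact hrow
  have LI : LinearIndependent K
      (fun m : {m : Fin v → Fin n → ℕ // ∀ j, ∑ i : Fin v, m i j = d j} =>
        conjMonomial α m.1) :=
    by
      have LI0 := (linearIndependent_monoidHom (Fin v → K) K).comp
        (fun m : {m : Fin v → Fin n → ℕ // ∀ j, ∑ i : Fin v, m i j = d j} =>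
          conjMonomialHom α m.1) hinj
      exact LI0
  exact ⟨LI, by rw [finrank_span_eq_card LI, card_expMatrix]⟩
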